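/- Let F be a linearly ordered field, n ≥ 3, and let L_1, …, L_n be a line arrangement in F² given by affine functions f_i. With indices modulo n, let V_i = L_i ∩ L_{i+1}, and suppose that for each i there is a sign ε_i ∈ {−1, +1} such that ε_i · f_i(V_k) > 0 for every k ∉ {i−1, i}. Then for each i the vertices V_{i−1} and V_i are adjacent on L_i: no line L_j with j ≠ i contains a point of the open segment {(1−t)·V_{i−1} + t·V_i : 0 < t < 1}. -/

import Mathlib

def arrLine {F : Type*} [Field F] [LinearOrder F] [IsStrictOrderedRing F] {n : ℕ} (a b c : Fin n → F)
    (i : Fin n) (p : F × F) : F :=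
  a i * p.1 + b i * p.2 - c i

lemma arrLine_convex {F : Type*} [Field F] [LinearOrder F] [IsStrictOrderedRing F] {n : ℕ} (a b c : Fin n → F)
    (j : Fin n) (P Q : F × F) (t : F) :
    arrLine a b c j ((1 - t) • P + t • Q)
      = (1 - t) * arrLine a b c j P + t * arrLine a b c j Q := by
  simp only [arrLine, Prod.fst_add, Prod.snd_add, Prod.smul_fst, Prod.smul_snd, smul_eq_mul]
  ring

lemma fin_two_ne_zero (n : ℕ) [NeZero n] (hn : 3 ≤ n) : (1 + 1 : Fin n) ≠ 0 := by
  simp [Fin.ext_iff, Fin.val_add, Fin.val_one']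
  rw [Nat.mod_eq_of_lt (by omega : 2 < n)]
  omega

lemma fin_one_ne_zero (n : ℕ) [NeZero n] (hn : 3 ≤ n) : (1 : Fin n) ≠ 0 := by
  simp [Fin.ext_iff, Fin.val_one']
  omega

theorem adjacent_vertices_of_global_cyclicity
    {F : Type*} [Field F] [LinearOrder F] [IsStrictOrderedRing F] (n : ℕ) [NeZero n] (hn : 3 ≤ n)
    (a b c : Fin n → F)
    (hnd : ∀ i : Fin n, (a i, b i) ≠ (0, 0))
    (hpar : ∀ i j : Fin n, i ≠ j → a i * b j ≠ a j * b i)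
    (hconc : ∀ i j k : Fin n, i ≠ j → j ≠ k → i ≠ k →
      ¬ ∃ p : F × F, arrLine a b c i p = 0 ∧ arrLine a b c j p = 0 ∧ arrLine a b c k p = 0)
    (V : Fin n → F × F)
    (hV : ∀ i : Fin n, arrLine a b c i (V i) = 0 ∧ arrLine a b c (i + 1) (V i) = 0)
    (ε : Fin n → F) (hε : ∀ i : Fin n, ε i = 1 ∨ ε i = -1)
    (hside : ∀ i k : Fin n, k ≠ i - 1 → k ≠ i → 0 < ε i * arrLine a b c i (V k)) :
    ∀ i j : Fin n, j ≠ i → ∀ t : F, 0 < t → t < 1 →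
      arrLine a b c j ((1 - t) • V (i - 1) + t • V i) ≠ 0 := by
  intro i j hji t ht0 ht1 hzero
  letI := Fin.instCommRing n
  have h2 : (1 + 1 : Fin n) ≠ 0 := fin_two_ne_zero n hn
  have h1 : (1 : Fin n) ≠ 0 := fin_one_ne_zero n hn
  rw [arrLine_convex] at hzero
  set f1 := arrLine a b c j (V (i - 1)) with hf1
  set f2 := arrLine a b c j (V i) with hf2
  by_cases hj1 : j = i - 1
  · have hf1z : f1 = 0 := by rw [hf1, hj1]; exact (hV (i - 1)).1
    have hf2s : 0 < ε j * f2 := by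
      apply hside j i
      · rw [hj1]; intro h; exact h2 (by linear_combination h)
      · rw [hj1]; intro h; exact h1 (by linear_combination h)
    have : ε j * ((1 - t) * f1 + t * f2) = 0 := by rw [hzero]; ring
    rw [hf1z] at this
    nlinarith [hf2s, ht0]
  · by_cases hj2 : j = i + 1
    · have hf2z : f2 = 0 := by rw [hf2, hj2]; exact (hV i).2
      have hf1s : 0 < ε j * f1 := by
        apply hside j (i - 1)
        · rw [hj2]; intro h; exact h1 (by linear_combination -h)
        · rw [hj2]; intro h; exact h2 (by linear_combination -h)
      have : ε j * ((1 - t) * f1 + t * f2) = 0 := by rw [hzero]; ring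
      rw [hf2z] at this
      nlinarith [hf1s, ht1]
    · have hf1s : 0 < ε j * f1 := by
        apply hside j (i - 1)
        · intro h; exact hji (by linear_combination -h)
        · exact fun h => hj1 h.symm
      have hf2s : 0 < ε j * f2 := by
        apply hside j i
        · intro h; exact hj2 (by linear_combination -h)
        · exact fun h => hji h.symm
      have : ε j * ((1 - t) * f1 + t * f2) = 0 := by rw [hzero]; ring
      nlinarith [hf1s, hf2s, ht0, ht1]
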